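/- Let p, q be nonnegative integers, let α_r > 0 (1 ≤ r ≤ p) and β_r > 0 (1 ≤ r ≤ q) be real, and let a_r, b_r be complex numbers such that α_r·n + a_r is never a nonpositive integer for any natural number n and any 1 ≤ r ≤ p. Set g(n) = ∏_{r=1}^p Γ(α_r n + a_r) / ∏_{r=1}^q Γ(β_r n + b_r) and κ = 1 + Σ_{r=1}^q β_r − Σ_{r=1}^p α_r. If κ > 0, then for every complex number z the series Σ_{n=0}^∞ g(n) z^n / n! converges absolutely. -/

import Mathlib

open Filter Topology

lemma aux_pow_le_exp_mul_factorial (n : ℕ) :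
    (n : ℝ) ^ n ≤ Real.exp n * n.factorial := by
  induction n with
  | zero => simp
  | succ n ih =>
    have he : ((n:ℝ) + 1) ^ n ≤ Real.exp 1 * n ^ n := by
      rcases Nat.eq_zero_or_pos n with h | h
      · simp [h]
      · have hn : (0:ℝ) < n := by exact_mod_cast h
        have h1 : ((n:ℝ) + 1) ^ n = ((1 + 1/n) * n) ^ n := by
          field_simp
        have h2 : ((1:ℝ) + 1/n) ^ n ≤ Real.exp 1 := by
          have := Real.add_one_le_exp (1/(n:ℝ))
          calc ((1:ℝ) + 1/n) ^ n ≤ Real.exp (1/n) ^ n := by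
                apply pow_le_pow_left₀ (by positivity) (by linarith)
            _ = Real.exp ((1/n) * n) := by rw [← Real.exp_nat_mul]; ring_nf
            _ = Real.exp 1 := by rw [div_mul_cancel₀]; exact hn.ne'
        calc ((n:ℝ) + 1) ^ n = ((1 + 1/n)) ^ n * n ^ n := by
              rw [h1, mul_pow]
          _ ≤ Real.exp 1 * n ^ n := by
              apply mul_le_mul_of_nonneg_right h2 (by positivity)
    calc ((n + 1 : ℕ) : ℝ) ^ (n + 1) = ((n:ℝ) + 1) * ((n:ℝ) + 1) ^ n := by
          push_cast; ring
      _ ≤ ((n:ℝ) + 1) * (Real.exp 1 * n ^ n) := by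
          apply mul_le_mul_of_nonneg_left he (by positivity)
      _ ≤ ((n:ℝ) + 1) * (Real.exp 1 * (Real.exp n * n.factorial)) := by
          apply mul_le_mul_of_nonneg_left _ (by positivity)
          apply mul_le_mul_of_nonneg_left ih (Real.exp_pos 1).le
      _ = Real.exp ((n + 1 : ℕ)) * ((n+1 : ℕ).factorial) := by
          rw [Nat.factorial_succ]
          push_cast
          rw [Real.exp_add]
          ring

lemma aux_Gamma_shift (z : ℂ) (hz : 1 ≤ z.re) (m : ℕ) :
    Complex.Gamma (z + m) = Complex.Gamma z * ∏ k ∈ Finset.range m, (z + k) := by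
  induction m with
  | zero => simp
  | succ m ih =>
    have hne : z + m ≠ 0 := by
      intro h
      have : (z + m).re = 0 := by rw [h]; simp
      simp only [Complex.add_re, Complex.natCast_re] at this
      have : (0:ℝ) ≤ m := Nat.cast_nonneg m
      linarith [‹(z + (m:ℂ)).re = 0›]
    have : z + ((m + 1 : ℕ) : ℂ) = (z + m) + 1 := by push_cast; ring
    rw [this, Complex.Gamma_add_one _ hne, ih, Finset.prod_range_succ]
    ring

/-- Bounds for `‖Γ‖` on the segment `re ∈ [1,2]`, `im = y`. -/

lemma aux_seg_bounds (y : ℝ) : ∃ S ε : ℝ, 1 ≤ S ∧ 0 < ε ∧ ∀ t : ℝ, 1 ≤ t → t ≤ 2 →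
    ε ≤ ‖Complex.Gamma (t + y * Complex.I)‖ ∧ ‖Complex.Gamma (t + y * Complex.I)‖ ≤ S := by
  set f : ℝ → ℝ := fun t => ‖Complex.Gamma (t + y * Complex.I)‖ with hf
  have hre : ∀ t : ℝ, ((t:ℂ) + y * Complex.I).re = t := by intro t; simp
  have hcont : ContinuousOn f (Set.Icc 1 2) := by
    intro t ht
    apply ContinuousAt.continuousWithinAt
    have hd : DifferentiableAt ℂ Complex.Gamma ((t:ℂ) + y * Complex.I) := by
      apply Complex.differentiableAt_Gamma
      intro m h
      have := congrArg Complex.re h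
      rw [hre] at this
      simp only [Complex.neg_re, Complex.natCast_re] at this
      have h0 : (0:ℝ) ≤ m := Nat.cast_nonneg m
      have := ht.1
      linarith
    have : ContinuousAt (fun t : ℝ => (t:ℂ) + y * Complex.I) t := by fun_prop
    have h2 : ContinuousAt (fun s : ℝ => Complex.Gamma ((s:ℂ) + y * Complex.I)) t :=
      ContinuousAt.comp (x := t) hd.continuousAt this
    exact h2.norm
  obtain ⟨tS, htS, hS⟩ := isCompact_Icc.exists_isMaxOn (Set.nonempty_Icc.2 (by norm_num)) hcont
  obtain ⟨tε, htε, hε⟩ := isCompact_Icc.exists_isMinOn (Set.nonempty_Icc.2 (by norm_num)) hcont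
  refine ⟨max (f tS) 1, f tε, le_max_right _ _, ?_, ?_⟩
  · have : ((tε:ℂ) + y * Complex.I) ≠ 0 ∧ Complex.Gamma ((tε:ℂ) + y * Complex.I) ≠ 0 := by
      constructor
      · intro h
        have := congrArg Complex.re h
        rw [hre] at this; simp at this; linarith [htε.1]
      · apply Complex.Gamma_ne_zero_of_re_pos
        rw [hre]; linarith [htε.1]
    simpa [f, norm_pos_iff] using this.2
  · intro t h1 h2
    exact ⟨hε ⟨h1, h2⟩, le_trans (hS ⟨h1, h2⟩) (le_max_left _ _)⟩

lemma aux_linear_eventually {A : ℝ} (hA : 0 < A) (B : ℝ) :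
    ∀ᶠ n : ℕ in atTop, B ≤ A * n := by
  have h1 : Tendsto (fun n : ℕ => A * n) atTop atTop :=
    Tendsto.const_mul_atTop hA tendsto_natCast_atTop_atTop
  exact h1.eventually_ge_atTop B

lemma aux_gamma_upper (c : ℝ) (hc : 0 < c) (a : ℂ) :
    ∃ C : ℝ, 0 < C ∧ ∀ᶠ n : ℕ in atTop,
      ‖Complex.Gamma ((c:ℂ) * n + a)‖ ≤
        Real.exp ((c * n + C) * Real.log (n + 1) + C * (n + 1)) := by
  obtain ⟨S, ε, hS1, hε, hseg⟩ := aux_seg_bounds a.im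
  obtain ⟨B, hB⟩ : ∃ B : ℝ, B = 2 + |a.im| := ⟨_, rfl⟩
  have hB2 : 2 ≤ B := by rw [hB]; have := abs_nonneg a.im; linarith
  obtain ⟨D, hD⟩ : ∃ D : ℝ, D = B + |a.re| + c + 1 := ⟨_, rfl⟩
  have hD1 : 1 ≤ D := by rw [hD]; have := abs_nonneg a.re; linarith
  have hlogS : 0 ≤ Real.log S := Real.log_nonneg hS1
  have hlogD : 0 ≤ Real.log D := Real.log_nonneg hD1
  have hare : 0 ≤ |a.re| := abs_nonneg a.re
  obtain ⟨C, hC⟩ : ∃ C : ℝ, C = |a.re| + Real.log S + (c + |a.re|) * Real.log D + 1 := ⟨_, rfl⟩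
  have hCD : 0 ≤ (c + |a.re|) * Real.log D := mul_nonneg (by linarith) hlogD
  have hCpos : 0 < C := by rw [hC]; linarith
  refine ⟨C, hCpos, ?_⟩
  have hev : ∀ᶠ n : ℕ in atTop, 2 ≤ c * n + a.re := by
    have h1 : Tendsto (fun n : ℕ => c * n + a.re) atTop atTop := by
      apply tendsto_atTop_add_const_right
      exact Tendsto.const_mul_atTop hc tendsto_natCast_atTop_atTop
    exact h1.eventually_ge_atTop 2
  filter_upwards [hev] with n hn
  have hn0 : (0:ℝ) ≤ n := Nat.cast_nonneg n
  set t₀ : ℝ := c * n + a.re with ht₀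
  have ht₀0 : 0 ≤ t₀ := by linarith
  have hfl2 : 2 ≤ ⌊t₀⌋₊ := Nat.le_floor (by exact_mod_cast hn)
  set m : ℕ := ⌊t₀⌋₊ - 1 with hm
  have hmcast : (m : ℝ) = (⌊t₀⌋₊ : ℝ) - 1 := by
    rw [hm, Nat.cast_sub (by omega)]; simp
  have hfl_le : (⌊t₀⌋₊ : ℝ) ≤ t₀ := Nat.floor_le ht₀0
  have hfl_gt : t₀ < (⌊t₀⌋₊ : ℝ) + 1 := Nat.lt_floor_add_one t₀
  set t : ℝ := t₀ - m with ht
  have h1t : 1 ≤ t := by rw [ht, hmcast]; linarith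
  have ht2 : t ≤ 2 := by rw [ht, hmcast]; linarith
  have hmle : (m : ℝ) ≤ c * n + |a.re| := by
    rw [hmcast]
    have := le_abs_self a.re
    linarith [ht₀ ▸ hfl_le]
  have hm0 : (0:ℝ) ≤ m := Nat.cast_nonneg m
  set z : ℂ := (t : ℂ) + (a.im : ℂ) * Complex.I with hz
  have hzre : z.re = t := by simp [hz]
  have hzim : z.im = a.im := by simp [hz]
  have key : (c:ℂ) * n + a = z + m := by
    apply Complex.ext
    · simp only [Complex.add_re, Complex.natCast_re, hzre, ht, ht₀]
      simp [Complex.mul_re]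
    · simp only [Complex.add_im, Complex.natCast_im, hzim]
      simp [Complex.mul_im]
  have hznorm : ‖z‖ ≤ B := by
    calc ‖z‖ ≤ |z.re| + |z.im| := Complex.norm_le_abs_re_add_abs_im z
      _ ≤ B := by rw [hzre, hzim, hB, abs_of_nonneg (by linarith)]; linarith
  rw [key, aux_Gamma_shift z (by rw [hzre]; exact h1t) m, norm_mul, norm_prod]
  have hprod : ∏ k ∈ Finset.range m, ‖z + (k:ℂ)‖ ≤ (B + m) ^ m := by
    calc ∏ k ∈ Finset.range m, ‖z + (k:ℂ)‖ ≤ ∏ k ∈ Finset.range m, (B + k) := by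
          apply Finset.prod_le_prod (fun k _ => norm_nonneg _)
          intro k hk
          calc ‖z + (k:ℂ)‖ ≤ ‖z‖ + ‖(k:ℂ)‖ := norm_add_le _ _
            _ ≤ B + k := by rw [Complex.norm_natCast]; linarith
      _ ≤ ∏ _k ∈ Finset.range m, (B + (m:ℝ)) := by
          apply Finset.prod_le_prod
          · intro k _
            have : (0:ℝ) ≤ k := Nat.cast_nonneg k
            linarith
          · intro k hk
            have : (k:ℝ) ≤ m := by exact_mod_cast (Finset.mem_range.mp hk).le
            linarith
      _ = (B + m) ^ m := by rw [Finset.prod_const, Finset.card_range]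
  have hpow : (B + m : ℝ) ^ m = Real.exp (m * Real.log (B + m)) := by
    rw [← Real.log_pow, Real.exp_log (by positivity)]
  have hlogn : 0 ≤ Real.log ((n:ℝ) + 1) := Real.log_nonneg (by linarith)
  have hlogBm : 0 ≤ Real.log (B + m) := Real.log_nonneg (by linarith)
  have hlog_le : Real.log (B + m) ≤ Real.log D + Real.log ((n:ℝ) + 1) := by
    rw [← Real.log_mul (by linarith) (by linarith)]
    apply Real.log_le_log (by linarith)
    have h2 : c * n ≤ D * n := mul_le_mul_of_nonneg_right (by rw [hD]; linarith) hn0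
    nlinarith
  have hexp_le : (m:ℝ) * Real.log (B + m) ≤
      (c * n + |a.re|) * (Real.log D + Real.log ((n:ℝ) + 1)) := by
    have h1 : (m:ℝ) * Real.log (B + m) ≤ (m:ℝ) * (Real.log D + Real.log ((n:ℝ)+1)) :=
      mul_le_mul_of_nonneg_left hlog_le hm0
    have h2 : (m:ℝ) * (Real.log D + Real.log ((n:ℝ)+1)) ≤
        (c * n + |a.re|) * (Real.log D + Real.log ((n:ℝ)+1)) :=
      mul_le_mul_of_nonneg_right hmle (by linarith)
    linarith
  have hS' : ‖Complex.Gamma z‖ ≤ S := (hseg t h1t ht2).2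
  clear_value z t m t₀
  clear hseg hev key hm hmcast ht hfl_le hfl_gt ht₀ hfl2 hzre hzim hznorm
  calc ‖Complex.Gamma z‖ * ∏ k ∈ Finset.range m, ‖z + (k:ℂ)‖
      ≤ S * (B + m) ^ m := by
        apply mul_le_mul hS' hprod (Finset.prod_nonneg fun k _ => norm_nonneg _) (by linarith)
    _ = Real.exp (Real.log S + m * Real.log (B + m)) := by
        rw [Real.exp_add, Real.exp_log (by linarith), hpow]
    _ ≤ Real.exp ((c * n + C) * Real.log ((n:ℝ) + 1) + C * ((n:ℝ) + 1)) := by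
        apply Real.exp_le_exp.mpr
        have key1 : (c * n + |a.re|) * Real.log ((n:ℝ)+1) ≤ (c * n + C) * Real.log ((n:ℝ)+1) := by
          apply mul_le_mul_of_nonneg_right _ hlogn
          have : |a.re| ≤ C := by rw [hC]; linarith
          linarith
        have key2 : Real.log S + (c * n + |a.re|) * Real.log D ≤ C * ((n:ℝ) + 1) := by
          have e1 : (c * n + |a.re|) ≤ (c + |a.re|) * ((n:ℝ) + 1) := by
            have expand : (c + |a.re|) * ((n:ℝ)+1) = c * n + |a.re| + (c + |a.re| * n) := by ring
            linarith [mul_nonneg hare hn0]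
          have e2 : (c * n + |a.re|) * Real.log D ≤ (c + |a.re|) * ((n:ℝ)+1) * Real.log D :=
            mul_le_mul_of_nonneg_right e1 hlogD
          have e3 : (0:ℝ) ≤ Real.log S * n := mul_nonneg hlogS hn0
          have e6 : (0:ℝ) ≤ Real.log D * (c + |a.re| * n) :=
            mul_nonneg hlogD (add_nonneg hc.le (mul_nonneg hare hn0))
          have e4 : (Real.log S + (c + |a.re|) * Real.log D) * ((n:ℝ)+1) ≤ C * ((n:ℝ)+1) := by
            apply mul_le_mul_of_nonneg_right _ (by linarith)
            rw [hC]; linarith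
          have expand2 : (Real.log S + (c + |a.re|) * Real.log D) * ((n:ℝ)+1) =
              Real.log S + (c * n + |a.re|) * Real.log D
                + (Real.log S * n + Real.log D * (c + |a.re| * n)) := by ring
          linarith [e3, e4, e6, expand2]
        linarith [hexp_le, key1, key2]

lemma aux_gamma_lower (c : ℝ) (hc : 0 < c) (b : ℂ) :
    ∃ C : ℝ, 0 < C ∧ ∀ᶠ n : ℕ in atTop,
      Real.exp ((c * n - C) * Real.log (n + 1) - C * (n + 1)) ≤
        ‖Complex.Gamma ((c:ℂ) * n + b)‖ := by
  obtain ⟨S, ε, hS1, hε, hseg⟩ := aux_seg_bounds b.im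
  obtain ⟨E, hE⟩ : ∃ E : ℝ, E = 1/c + 1 := ⟨_, rfl⟩
  have hE1 : 1 ≤ E := by rw [hE]; have := (one_div_pos.mpr hc).le; linarith
  have hEc : E * c = 1 + c := by rw [hE]; field_simp
  have hlogE : 0 ≤ Real.log E := Real.log_nonneg hE1
  have hbre : 0 ≤ |b.re| := abs_nonneg b.re
  have hlogε : -|Real.log ε| ≤ Real.log ε := neg_abs_le _
  have habsε : 0 ≤ |Real.log ε| := abs_nonneg _
  obtain ⟨C, hC⟩ : ∃ C : ℝ,
      C = |b.re| + 2 + |Real.log ε| + c * Real.log E + c + |b.re| + 1 := ⟨_, rfl⟩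
  have hClogE : 0 ≤ c * Real.log E := mul_nonneg hc.le hlogE
  have hCpos : 0 < C := by rw [hC]; linarith
  refine ⟨C, hCpos, ?_⟩
  have h1 := (aux_linear_eventually hc (2 - b.re))
  have h2 := (aux_linear_eventually hc (1 - E * (b.re - 2)))
  have h3 := (aux_linear_eventually one_pos (E - 1))
  have h4 := (aux_linear_eventually hc (|b.re| + 2))
  filter_upwards [h1, h2, h3, h4] with n hn1 hn2 hn3 hn4
  have hn0 : (0:ℝ) ≤ n := Nat.cast_nonneg n
  have hn : 2 ≤ c * n + b.re := by linarith
  set t₀ : ℝ := c * n + b.re with ht₀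
  have ht₀0 : 0 ≤ t₀ := by linarith
  have hfl2 : 2 ≤ ⌊t₀⌋₊ := Nat.le_floor (by exact_mod_cast hn)
  set m : ℕ := ⌊t₀⌋₊ - 1 with hm
  have hmcast : (m : ℝ) = (⌊t₀⌋₊ : ℝ) - 1 := by
    rw [hm, Nat.cast_sub (by omega)]; simp
  have hfl_le : (⌊t₀⌋₊ : ℝ) ≤ t₀ := Nat.floor_le ht₀0
  have hfl_gt : t₀ < (⌊t₀⌋₊ : ℝ) + 1 := Nat.lt_floor_add_one t₀
  set t : ℝ := t₀ - m with ht
  have h1t : 1 ≤ t := by rw [ht, hmcast]; linarith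
  have ht2 : t ≤ 2 := by rw [ht, hmcast]; linarith
  have hfl2' : (2:ℝ) ≤ (⌊t₀⌋₊ : ℝ) := by exact_mod_cast hfl2
  have hm1 : (1:ℝ) ≤ m := by rw [hmcast]; linarith
  have hmub : (m:ℝ) ≤ c * n + |b.re| := by
    rw [hmcast]
    have := le_abs_self b.re
    linarith [ht₀ ▸ hfl_le]
  have hmlb : c * n + b.re - 2 ≤ (m:ℝ) := by rw [hmcast]; linarith [ht₀ ▸ hfl_gt]
  set w : ℂ := (t : ℂ) + (b.im : ℂ) * Complex.I with hw
  have hwre : w.re = t := by simp [hw]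
  have key : (c:ℂ) * n + b = w + m := by
    apply Complex.ext
    · simp only [Complex.add_re, Complex.natCast_re, hwre, ht, ht₀]
      simp [Complex.mul_re]
    · simp only [Complex.add_im, Complex.natCast_im, hw]
      simp [Complex.mul_im]
  rw [key, aux_Gamma_shift w (by rw [hwre]; exact h1t) m, norm_mul, norm_prod]
  -- lower bound for the product: ∏ ‖w+k‖ ≥ m!
  have hprod : (m.factorial : ℝ) ≤ ∏ k ∈ Finset.range m, ‖w + (k:ℂ)‖ := by
    have hfact : ((m.factorial : ℕ) : ℝ) = ∏ k ∈ Finset.range m, ((k:ℝ) + 1) := by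
      rw [← Finset.prod_range_add_one_eq_factorial]; push_cast; rfl
    rw [hfact]
    apply Finset.prod_le_prod
    · intro k _; positivity
    · intro k _
      have hre : (k:ℝ) + 1 ≤ (w + (k:ℂ)).re := by
        simp only [Complex.add_re, Complex.natCast_re, hwre]; linarith
      calc (k:ℝ) + 1 ≤ (w + (k:ℂ)).re := hre
        _ ≤ |(w + (k:ℂ)).re| := le_abs_self _
        _ ≤ ‖w + (k:ℂ)‖ := Complex.abs_re_le_norm _
  -- m! ≥ exp (m log m - m)
  have hfac_lb : Real.exp (m * Real.log m - m) ≤ (m.factorial : ℝ) := by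
    have h := aux_pow_le_exp_mul_factorial m
    have hmpos : (0:ℝ) < m := by linarith
    have hpow : (m:ℝ) ^ m = Real.exp (m * Real.log m) := by
      rw [← Real.log_pow, Real.exp_log (by positivity)]
    rw [hpow] at h
    rw [Real.exp_sub]
    rw [div_le_iff₀ (Real.exp_pos _)]
    linarith [h]
  have hεle : ε ≤ ‖Complex.Gamma w‖ := (hseg t h1t ht2).1
  have hm0 : (0:ℝ) ≤ m := by linarith
  have hL0 : 0 ≤ Real.log ((n:ℝ) + 1) := Real.log_nonneg (by linarith)
  have hEn : E ≤ (n:ℝ) + 1 := by linarith [hn3, one_mul ((n:ℝ))]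
  have hlogEn : Real.log E ≤ Real.log ((n:ℝ) + 1) :=
    Real.log_le_log (by linarith) hEn
  have hmE : ((n:ℝ) + 1) ≤ E * m := by
    have e1 : E * (c * n + b.re - 2) ≤ E * m :=
      mul_le_mul_of_nonneg_left hmlb (by linarith)
    have e2 : E * (c * n + b.re - 2) = (1 + c) * n + E * (b.re - 2) := by
      linear_combination (n:ℝ) * hEc
    linarith
  have hmlog : Real.log ((n:ℝ) + 1) - Real.log E ≤ Real.log m := by
    rw [← Real.log_div (by positivity) (by positivity : E ≠ 0)]
    apply Real.log_le_log (by positivity)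
    rw [div_le_iff₀ (by linarith : (0:ℝ) < E)]
    linarith [mul_comm E (m:ℝ)]
  -- product chain
  have p1 : (c * n - (|b.re| + 2)) * (Real.log ((n:ℝ)+1) - Real.log E) ≤
      (m:ℝ) * (Real.log ((n:ℝ)+1) - Real.log E) := by
    apply mul_le_mul_of_nonneg_right _ (by linarith)
    have := neg_abs_le b.re
    linarith
  have p2 : (m:ℝ) * (Real.log ((n:ℝ)+1) - Real.log E) ≤ (m:ℝ) * Real.log m :=
    mul_le_mul_of_nonneg_left hmlog hm0
  have inter : (c * n - (|b.re| + 2)) * Real.log ((n:ℝ)+1)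
      - (|Real.log ε| + c * Real.log E + c + |b.re|) * ((n:ℝ)+1)
      ≤ Real.log ε + ((m:ℝ) * Real.log m - m) := by
    have q1 : 0 ≤ (|b.re| + 2) * Real.log E := mul_nonneg (by linarith) hlogE
    have q2 : 0 ≤ |Real.log ε| * n := mul_nonneg habsε hn0
    linarith [p1, p2, hmub, hlogε, q1, q2, hClogE, mul_nonneg hbre hn0]
  have final : (c * n - C) * Real.log ((n:ℝ)+1) - C * ((n:ℝ)+1) ≤
      Real.log ε + ((m:ℝ) * Real.log m - m) := by
    have r1 : 0 ≤ (C - (|b.re| + 2)) * Real.log ((n:ℝ)+1) :=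
      mul_nonneg (by rw [hC]; linarith) hL0
    have r2 : (|Real.log ε| + c * Real.log E + c + |b.re|) * ((n:ℝ)+1) ≤ C * ((n:ℝ)+1) :=
      mul_le_mul_of_nonneg_right (by rw [hC]; linarith) (by linarith)
    linarith [inter, r1, r2]
  calc Real.exp ((c * n - C) * Real.log ((n:ℝ)+1) - C * ((n:ℝ)+1))
      ≤ Real.exp (Real.log ε + ((m:ℝ) * Real.log m - m)) := Real.exp_le_exp.mpr final
    _ = ε * Real.exp ((m:ℝ) * Real.log m - m) := by
        rw [Real.exp_add, Real.exp_log hε]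
    _ ≤ ‖Complex.Gamma w‖ * ∏ k ∈ Finset.range m, ‖w + (k:ℂ)‖ := by
        apply mul_le_mul hεle _ (Real.exp_nonneg _) (norm_nonneg _)
        exact le_trans hfac_lb hprod

lemma aux_factorial_lb (n : ℕ) (hn : 1 ≤ n) :
    Real.exp ((n:ℝ) * Real.log (n + 1) - (1 + Real.log 2) * n) ≤ (n.factorial : ℝ) := by
  have hn1 : (1:ℝ) ≤ n := by exact_mod_cast hn
  have h1 : ((n:ℝ) + 1) ^ n ≤ (2:ℝ) ^ n * (n:ℝ) ^ n := by
    rw [← mul_pow]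
    exact pow_le_pow_left₀ (by linarith) (by linarith) n
  have h2 := aux_pow_le_exp_mul_factorial n
  have h3 : ((n:ℝ) + 1) ^ n ≤ (2:ℝ) ^ n * (Real.exp n * n.factorial) := by
    calc ((n:ℝ) + 1) ^ n ≤ (2:ℝ) ^ n * (n:ℝ) ^ n := h1
      _ ≤ (2:ℝ) ^ n * (Real.exp n * n.factorial) :=
        mul_le_mul_of_nonneg_left h2 (by positivity)
  have e1 : ((n:ℝ) + 1) ^ n = Real.exp ((n:ℝ) * Real.log ((n:ℝ) + 1)) := by
    rw [← Real.log_pow, Real.exp_log (by positivity)]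
  have e2 : (2:ℝ) ^ n = Real.exp ((n:ℝ) * Real.log 2) := by
    rw [← Real.log_pow, Real.exp_log (by positivity)]
  rw [e1, e2] at h3
  have h4 : Real.exp ((n:ℝ) * Real.log ((n:ℝ)+1) - (1 + Real.log 2) * n) =
      Real.exp ((n:ℝ) * Real.log ((n:ℝ)+1)) / (Real.exp ((n:ℝ) * Real.log 2) * Real.exp n) := by
    rw [← Real.exp_add, ← Real.exp_sub]; ring_nf
  rw [h4, div_le_iff₀ (by positivity)]
  calc Real.exp ((n:ℝ) * Real.log ((n:ℝ)+1))
      ≤ Real.exp ((n:ℝ) * Real.log 2) * (Real.exp (n:ℝ) * n.factorial) := h3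
    _ = (n.factorial : ℝ) * (Real.exp ((n:ℝ) * Real.log 2) * Real.exp (n:ℝ)) := by ring

/-- The coefficient `g(n)` of the generalised Wright function
`ₚΨ_q(z) = Σ g(n) zⁿ/n!`. -/
noncomputable def wrightCoeff (p q : ℕ) (α : Fin p → ℝ) (a : Fin p → ℂ)
    (β : Fin q → ℝ) (b : Fin q → ℂ) (s : ℂ) : ℂ :=
  (∏ r, Complex.Gamma ((α r : ℂ) * s + a r)) /
    ∏ r, Complex.Gamma ((β r : ℂ) * s + b r)

/-- If `κ = 1 + Σ β_r − Σ α_r > 0`, the series defining the generalised Wright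
function converges absolutely for every complex `z`. -/
theorem wright_summable_of_kappa_pos (p q : ℕ) (α : Fin p → ℝ) (a : Fin p → ℂ)
    (β : Fin q → ℝ) (b : Fin q → ℂ)
    (hα : ∀ r, 0 < α r) (hβ : ∀ r, 0 < β r)
    (ha : ∀ (n : ℕ) (r : Fin p) (m : ℕ), (α r : ℂ) * (n : ℂ) + a r ≠ -(m : ℂ))
    (hκ : 0 < 1 + ∑ r, β r - ∑ r, α r) :
    ∀ z : ℂ, Summable (fun n : ℕ =>
      ‖wrightCoeff p q α a β b (n : ℂ) * z ^ n / (n.factorial : ℂ)‖) := by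
  intro z
  choose Cu hCu0 hCu using fun r : Fin p => aux_gamma_upper (α r) (hα r) (a r)
  choose Cl hCl0 hCl using fun r : Fin q => aux_gamma_lower (β r) (hβ r) (b r)
  set A : ℝ := ∑ r, α r with hA
  set Bs : ℝ := ∑ r, β r with hBs
  set P : ℝ := ∑ r, Cu r with hP
  set Q : ℝ := ∑ r, Cl r with hQ
  have hP0 : 0 ≤ P := Finset.sum_nonneg fun r _ => (hCu0 r).le
  have hQ0 : 0 ≤ Q := Finset.sum_nonneg fun r _ => (hCl0 r).le
  set κ : ℝ := 1 + Bs - A with hκdef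
  set R : ℝ := ‖z‖ + 1 with hR
  have hR1 : (1:ℝ) ≤ R := by rw [hR]; have := norm_nonneg z; linarith
  have hlogR : 0 ≤ Real.log R := Real.log_nonneg hR1
  set M : ℝ := P + Q + Real.log R + 1 + Real.log 2 with hM
  have hlog2 : 0 ≤ Real.log 2 := Real.log_nonneg one_le_two
  have hM0 : 0 ≤ M := by rw [hM]; linarith
  clear_value A Bs P Q κ R M
  -- eventual bound: term ≤ exp (-n)
  have hkey : ∀ᶠ n : ℕ in atTop,
      ‖wrightCoeff p q α a β b (n : ℂ) * z ^ n / (n.factorial : ℂ)‖ ≤ Real.exp (-(n:ℝ)) := by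
    have hup : ∀ᶠ n : ℕ in atTop, ∀ r : Fin p,
        ‖Complex.Gamma ((α r : ℂ) * n + a r)‖ ≤
          Real.exp ((α r * n + Cu r) * Real.log (n + 1) + Cu r * (n + 1)) :=
      eventually_all.mpr hCu
    have hlo : ∀ᶠ n : ℕ in atTop, ∀ r : Fin q,
        Real.exp ((β r * n - Cl r) * Real.log (n + 1) - Cl r * (n + 1)) ≤
          ‖Complex.Gamma ((β r : ℂ) * n + b r)‖ :=
      eventually_all.mpr hCl
    have hLtop : Tendsto (fun n : ℕ => Real.log ((n:ℝ) + 1)) atTop atTop :=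
      Real.tendsto_log_atTop.comp
        (tendsto_atTop_add_const_right _ 1 tendsto_natCast_atTop_atTop)
    have he2 : ∀ᶠ n : ℕ in atTop, (2 * (2 * M + 1)) / κ ≤ Real.log ((n:ℝ) + 1) :=
      hLtop.eventually_ge_atTop _
    have he1 : ∀ᶠ n : ℕ in atTop, P + Q ≤ (κ / 2) * n := by
      have := Tendsto.const_mul_atTop (half_pos hκ) tendsto_natCast_atTop_atTop
      exact this.eventually_ge_atTop _
    filter_upwards [hup, hlo, he1, he2, eventually_ge_atTop 1] with n hupn hlon hn1 hn2 hn3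
    have hn0 : (0:ℝ) ≤ n := Nat.cast_nonneg n
    have hnn1 : (1:ℝ) ≤ n := by exact_mod_cast hn3
    set L : ℝ := Real.log ((n:ℝ) + 1) with hL
    clear_value L
    have hL0 : 0 ≤ L := hL ▸ Real.log_nonneg (by linarith)
    -- numerator bound
    have hnum : ∏ r, ‖Complex.Gamma ((α r : ℂ) * n + a r)‖ ≤
        Real.exp ((A * n + P) * L + P * ((n:ℝ) + 1)) := by
      calc ∏ r, ‖Complex.Gamma ((α r : ℂ) * n + a r)‖
          ≤ ∏ r, Real.exp ((α r * n + Cu r) * L + Cu r * ((n:ℝ) + 1)) :=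
            Finset.prod_le_prod (fun r _ => norm_nonneg _) (fun r _ => hupn r)
        _ = Real.exp (∑ r, ((α r * n + Cu r) * L + Cu r * ((n:ℝ) + 1))) :=
            (Real.exp_sum _ _).symm
        _ = Real.exp ((A * n + P) * L + P * ((n:ℝ) + 1)) := by
            congr 1
            rw [Finset.sum_add_distrib, ← Finset.sum_mul, ← Finset.sum_mul,
              Finset.sum_add_distrib, ← Finset.sum_mul, hA, hP]
    -- denominator bound
    have hden : Real.exp ((Bs * n - Q) * L - Q * ((n:ℝ) + 1)) ≤
        ∏ r, ‖Complex.Gamma ((β r : ℂ) * n + b r)‖ := by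
      calc Real.exp ((Bs * n - Q) * L - Q * ((n:ℝ) + 1))
          = Real.exp (∑ r, ((β r * n - Cl r) * L - Cl r * ((n:ℝ) + 1))) := by
            congr 1
            rw [Finset.sum_sub_distrib, ← Finset.sum_mul, ← Finset.sum_mul,
              Finset.sum_sub_distrib, ← Finset.sum_mul, hBs, hQ]
        _ = ∏ r, Real.exp ((β r * n - Cl r) * L - Cl r * ((n:ℝ) + 1)) := Real.exp_sum _ _
        _ ≤ ∏ r, ‖Complex.Gamma ((β r : ℂ) * n + b r)‖ :=
            Finset.prod_le_prod (fun r _ => (Real.exp_pos _).le) (fun r _ => hlon r)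
    have hzpow : ‖z‖ ^ n ≤ Real.exp ((n:ℝ) * Real.log R) := by
      calc ‖z‖ ^ n ≤ R ^ n := pow_le_pow_left₀ (norm_nonneg z) (by rw [hR]; linarith) n
        _ = Real.exp ((n:ℝ) * Real.log R) := by
          rw [← Real.log_pow, Real.exp_log (by positivity)]
    have hfact := aux_factorial_lb n hn3
    rw [← hL] at hfact
    -- rewrite the norm
    have hnorm : ‖wrightCoeff p q α a β b (n : ℂ) * z ^ n / (n.factorial : ℂ)‖ =
        (∏ r, ‖Complex.Gamma ((α r : ℂ) * n + a r)‖) * ‖z‖ ^ n /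
          ((∏ r, ‖Complex.Gamma ((β r : ℂ) * n + b r)‖) * (n.factorial : ℝ)) := by
      rw [wrightCoeff, norm_div, norm_mul, norm_div, norm_prod, norm_prod, norm_pow,
        Complex.norm_natCast]
      ring
    rw [hnorm]
    have hdenpos : (0:ℝ) < Real.exp ((Bs * n - Q) * L - Q * ((n:ℝ) + 1)) *
        Real.exp ((n:ℝ) * L - (1 + Real.log 2) * n) := by positivity
    have step : (∏ r, ‖Complex.Gamma ((α r : ℂ) * n + a r)‖) * ‖z‖ ^ n /
          ((∏ r, ‖Complex.Gamma ((β r : ℂ) * n + b r)‖) * (n.factorial : ℝ)) ≤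
        (Real.exp ((A * n + P) * L + P * ((n:ℝ) + 1)) * Real.exp ((n:ℝ) * Real.log R)) /
          (Real.exp ((Bs * n - Q) * L - Q * ((n:ℝ) + 1)) *
            Real.exp ((n:ℝ) * L - (1 + Real.log 2) * n)) := by
      apply div_le_div₀ (by positivity)
      · exact mul_le_mul hnum hzpow (by positivity) (Real.exp_nonneg _)
      · exact hdenpos
      · exact mul_le_mul hden hfact (Real.exp_nonneg _)
          (le_trans (Real.exp_pos _).le hden)
    refine le_trans step ?_
    rw [← Real.exp_add, ← Real.exp_add, ← Real.exp_sub, Real.exp_le_exp]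
    -- final arithmetic: exponent ≤ -n
    have hv1 : (P + Q) * L ≤ ((κ / 2) * n) * L := mul_le_mul_of_nonneg_right hn1 hL0
    have hv2 : ((2 * (2 * M + 1)) / κ) * ((κ/2) * n) ≤ L * ((κ/2) * n) :=
      mul_le_mul_of_nonneg_right hn2 (by positivity)
    have hκc : ((2 * (2 * M + 1)) / κ) * ((κ/2) * n) = (2 * M + 1) * n := by
      field_simp
    rw [hκc] at hv2
    have hexpand : (A * n + P) * L + P * ((n:ℝ)+1) + (n:ℝ) * Real.log R
        - ((Bs * n - Q) * L - Q * ((n:ℝ)+1) + ((n:ℝ) * L - (1 + Real.log 2) * n))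
        = -(κ * n) * L + (P + Q) * L + (P + Q) * ((n:ℝ)+1) + (n:ℝ) * Real.log R
          + (1 + Real.log 2) * n := by
      rw [hκdef]; ring
    rw [hexpand]
    have hMn : (P + Q) * ((n:ℝ)+1) + (n:ℝ) * Real.log R + (1 + Real.log 2) * n ≤
        2 * M * n := by
      rw [hM]
      have q0 : (P + Q) * 1 ≤ (P + Q) * n := mul_le_mul_of_nonneg_left hnn1 (by linarith)
      have q1 : 0 ≤ Real.log R * n := mul_nonneg hlogR hn0
      have q2 : 0 ≤ Real.log 2 * n := mul_nonneg hlog2 hn0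
      linarith [q0, q1, q2]
    have hfin : -(κ * n) * L + ((κ/2) * n) * L ≤ -(2 * M + 1) * n := by
      have : -(κ * n) * L + ((κ/2) * n) * L = -(((κ/2) * n) * L) := by ring
      rw [this]
      have := hv2
      linarith
    linarith [hv1, hfin, hMn]
  -- conclude summability
  obtain ⟨N, hN⟩ := eventually_atTop.mp hkey
  apply (summable_nat_add_iff N).mp
  refine Summable.of_nonneg_of_le (fun n => norm_nonneg _) (fun n => ?_)
    Real.summable_exp_neg_nat
  calc ‖wrightCoeff p q α a β b ((n + N : ℕ) : ℂ) * z ^ (n + N) / ((n + N).factorial : ℂ)‖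
        ≤ Real.exp (-((n + N : ℕ):ℝ)) := hN (n + N) (by omega)
    _ ≤ Real.exp (-(n:ℝ)) := by
        apply Real.exp_le_exp.mpr
        push_cast
        linarith [Nat.cast_nonneg (α := ℝ) N]
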